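/- arXiv:2604.19313 — 2 statements merged into one kernel-verified Lean document; each statement's English description precedes it below -/
import Mathlib

section
/- The compact elements of the frame of radical ideals of a commutative ring R are exactly the radicals of finitely generated ideals. -/
/-- The frame of radical ideals of `R`. -/
abbrev RadId (R : Type*) [CommRing R] := {I : Ideal R // I.IsRadical}

/-- The Galois insertion of the radical into radical ideals. -/
noncomputable def radicalGI (R : Type*) [CommRing R] :
    GaloisInsertion (fun I : Ideal R => (⟨I.radical, I.radical_isRadical⟩ : RadId R))
      (fun J : RadId R => (J : Ideal R)) where
  choice I _ := ⟨I.radical, I.radical_isRadical⟩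
  gc I J := J.2.radical_le_iff
  le_l_u J := Ideal.le_radical
  choice_eq _ _ := rfl

noncomputable instance (R : Type*) [CommRing R] : CompleteLattice (RadId R) :=
  (radicalGI R).liftCompleteLattice

/-- An element `k` of a complete lattice is compact if any set with `sSup` above `k` has a
finite subset with `sup` above `k` (the definition of the older Mathlib). -/
def CompleteLattice.IsCompactElement {α : Type*} [CompleteLattice α] (k : α) :=
  ∀ s : Set α, k ≤ sSup s → ∃ t : Finset α, ↑t ⊆ s ∧ k ≤ t.sup id

theorem CompleteLattice.isCompactElement_iff {α : Type u} [CompleteLattice α] (k : α) :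
    CompleteLattice.IsCompactElement k ↔
      ∀ (ι : Type u) (s : ι → α), k ≤ iSup s → ∃ t : Finset ι, k ≤ t.sup s := by
  classical
  constructor
  · intro hc ι s hs
    obtain ⟨t, ht1, ht2⟩ := hc (Set.range s) (by rwa [sSup_range])
    choose g hg using fun x (hx : x ∈ t) => ht1 hx
    refine ⟨t.attach.image (fun x => g x.1 x.2), le_trans ht2 (Finset.sup_le fun x hx => ?_)⟩
    rw [id, ← hg x hx]
    exact Finset.le_sup (f := s) (Finset.mem_image.mpr ⟨⟨x, hx⟩, Finset.mem_attach _ _, rfl⟩)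
  · intro h S hS
    obtain ⟨t, ht⟩ := h S (fun x => (x : α)) (by rwa [← sSup_eq_iSup'])
    refine ⟨t.image Subtype.val, ?_, ?_⟩
    · intro x hx
      obtain ⟨a, -, rfl⟩ := Finset.mem_image.mp (Finset.mem_coe.mp hx)
      exact a.2
    · rw [Finset.sup_image]
      exact ht

lemma coe_sSup' {R : Type*} [CommRing R] (S : Set (RadId R)) :
    ((sSup S : RadId R) : Ideal R) = (sSup ((fun J : RadId R => (J : Ideal R)) '' S)).radical :=
  rfl

set_option maxHeartbeats 1000000 in
theorem compact_iff_radical_fg (R : Type*) [CommRing R] (I : RadId R) :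
    CompleteLattice.IsCompactElement I ↔
      ∃ s : Finset R, (I : Ideal R) = (Ideal.span (s : Set R)).radical := by
  classical
  constructor
  · intro hc
    rw [CompleteLattice.isCompactElement_iff] at hc
    -- cover I by radicals of principal ideals of its elements
    set f : {x : R // x ∈ (I : Ideal R)} → RadId R :=
      fun x => ⟨(Ideal.span {(x : R)}).radical, Ideal.radical_isRadical _⟩ with hf
    have hle : I ≤ ⨆ x, f x := by
      rw [iSup, ← Subtype.coe_le_coe, coe_sSup']
      intro y hy
      have h1 : Ideal.span {y} ≤ sSup ((fun J : RadId R => (J : Ideal R)) '' Set.range f) :=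
        le_trans Ideal.le_radical (le_sSup ⟨f ⟨y, hy⟩, Set.mem_range_self _, rfl⟩)
      exact Ideal.le_radical (h1 (Ideal.subset_span rfl))
    obtain ⟨t, ht⟩ := hc _ f hle
    refine ⟨t.image Subtype.val, le_antisymm ?_ ?_⟩
    · refine le_trans (Subtype.coe_le_coe.mpr ht) ?_
      have : ∀ x ∈ t, f x ≤ ⟨(Ideal.span ((t.image Subtype.val : Finset R) : Set R)).radical,
          Ideal.radical_isRadical _⟩ := by
        intro x hx
        rw [← Subtype.coe_le_coe]
        refine Ideal.radical_mono (Ideal.span_mono (Set.singleton_subset_iff.mpr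
          (Finset.mem_coe.mpr ?_)))
        exact Finset.mem_image_of_mem Subtype.val hx
      exact Subtype.coe_le_coe.mpr (Finset.sup_le this)
    · have : Ideal.span ((t.image Subtype.val : Finset R) : Set R) ≤ (I : Ideal R) := by
        rw [Ideal.span_le]
        intro y hy
        obtain ⟨x, -, rfl⟩ := Finset.mem_image.mp (Finset.mem_coe.mp hy)
        exact Subtype.prop x
      calc (Ideal.span _).radical ≤ (I : Ideal R).radical := Ideal.radical_mono this
        _ = (I : Ideal R) := I.2.radical
  · rintro ⟨s, hs⟩
    intro S hS
    rw [← Subtype.coe_le_coe, coe_sSup', hs, Ideal.radical_le_radical_iff, Ideal.span_le] at hS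
    -- each generator has a power in sSup of finitely many members of S
    have key : ∀ x ∈ s, ∃ t : Finset (RadId R), ↑t ⊆ S ∧
        (x : R) ∈ ((t.sup id : RadId R) : Ideal R) := by
      intro x hx
      obtain ⟨n, hn⟩ := hS hx
      rw [show sSup ((fun J : RadId R => (J : Ideal R)) '' S)
            = sSup ((fun J : RadId R => (J : Ideal R)) '' S) from rfl] at hn
      rw [Submodule.mem_sSup_iff_exists_finset] at hn
      obtain ⟨u, huS, hu⟩ := hn
      -- pick preimages in S
      have : ∀ J ∈ u, ∃ K : RadId R, K ∈ S ∧ (K : Ideal R) = J := by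
        intro J hJ
        obtain ⟨K, hK, rfl⟩ := huS hJ
        exact ⟨K, hK, rfl⟩
      choose g hg1 hg2 using this
      set v : Finset (RadId R) := u.attach.image (fun J => g J.1 J.2) with hv
      refine ⟨v, ?_, ?_⟩
      · intro K hK
        rw [hv] at hK
        simp only [Finset.coe_image, Set.mem_image, Finset.mem_coe, Finset.mem_attach,
          true_and, Subtype.exists] at hK
        obtain ⟨J, hJ, rfl⟩ := hK
        exact hg1 _ _
      · have hsup : (⨆ J ∈ u, J) ≤ ((v.sup id : RadId R) : Ideal R) := by
          refine iSup₂_le fun J hJ => ?_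
          rw [← hg2 J hJ]
          exact Subtype.coe_le_coe.mpr (Finset.le_sup (f := id)
            (Finset.mem_image.mpr ⟨⟨J, hJ⟩, Finset.mem_attach _ _, rfl⟩))
        exact (v.sup id).2 ⟨n, hsup hu⟩
    choose T hT1 hT2 using key
    refine ⟨s.attach.sup (fun x => T x.1 x.2), ?_, ?_⟩
    · intro K hK
      obtain ⟨x, -, hx⟩ := Finset.mem_sup.mp (Finset.mem_coe.mp hK)
      exact hT1 _ _ hx
    · rw [← Subtype.coe_le_coe, hs]
      have hrad := ((s.attach.sup (fun x => T x.1 x.2)).sup id).2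
      rw [← hrad.radical]
      refine Ideal.radical_mono ?_
      rw [Ideal.span_le]
      intro x hx
      refine SetLike.le_def.mp (Subtype.coe_le_coe.mpr
        (Finset.sup_mono (Finset.le_sup (f := fun y : {y // y ∈ s} => T y.1 y.2)
          (Finset.mem_attach _ ⟨x, hx⟩)))) (hT2 x hx)
end

section
/- Let φ : R → S be a ring homomorphism between commutative rings. The map sending a radical ideal I of R to the radical of the ideal of S generated by φ(I) is a frame homomorphism from the frame of radical ideals of R to the frame of radical ideals of S: it preserves the top element, arbitrary joins, and finite meets. -/
private lemma rad_map_rad {R S : Type*} [CommRing R] [CommRing S] (φ : R →+* S)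
    (K : Ideal R) : (Ideal.map φ K.radical).radical = (Ideal.map φ K).radical := by
  apply le_antisymm
  · rw [← Ideal.radical_idem (Ideal.map φ K)]
    exact Ideal.radical_mono (Ideal.map_radical_le φ)
  · exact Ideal.radical_mono (Ideal.map_mono Ideal.le_radical)

theorem extension_frame_hom (R S : Type*) [CommRing R] [CommRing S] (φ : R →+* S) :
    ((Ideal.map φ (⊤ : Ideal R)).radical = ⊤) ∧
    (∀ (ι : Type*) (I : ι → Ideal R), (∀ i, (I i).IsRadical) →
      (Ideal.map φ ((⨆ i, I i).radical)).radical
        = (⨆ i, (Ideal.map φ (I i)).radical).radical) ∧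
    (∀ I J : Ideal R, I.IsRadical → J.IsRadical →
      (Ideal.map φ (I ⊓ J)).radical
        = (Ideal.map φ I).radical ⊓ (Ideal.map φ J).radical) := by
  refine ⟨?_, ?_, ?_⟩
  · rw [Ideal.map_top, Ideal.radical_top]
  · intro ι I hI
    rw [rad_map_rad, Ideal.map_iSup]
    apply le_antisymm
    · exact Ideal.radical_mono (iSup_mono fun i => Ideal.le_radical)
    · rw [← Ideal.radical_idem (⨆ i, Ideal.map φ (I i))]
      exact Ideal.radical_mono (iSup_le fun i =>
        Ideal.radical_mono (le_iSup (fun i => Ideal.map φ (I i)) i))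
  · intro I J hI hJ
    have h1 : (I ⊓ J) = (I * J).radical := by
      rw [Ideal.radical_mul, ← Ideal.radical_inf,
        (hI.inf hJ).radical]
    rw [h1, rad_map_rad, Ideal.map_mul, Ideal.radical_mul]
end
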